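/- Let q ≥ 11 be a real number. The function F(q) = log(4(q^2-2)/(3q-2)) - (1 + 4/(3q-2))·log q is positive for all q ≥ 11. -/

import Mathlib

private lemma exp_le_inv_one_sub {s : ℝ} (h1 : s < 1) :
    Real.exp s ≤ (1 - s)⁻¹ := by
  have h := Real.add_one_le_exp (-s)
  rw [Real.exp_neg] at h
  have hpos := Real.exp_pos s
  have hmul : (1 - s) * Real.exp s ≤ 1 := by
    have := mul_le_mul_of_nonneg_right h hpos.le
    rwa [inv_mul_cancel₀ (ne_of_gt hpos), neg_add_eq_sub] at this
  rw [inv_eq_one_div, le_div_iff₀ (by linarith : (0:ℝ) < 1 - s)]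
  linarith [hmul]

private lemma log_lb {c x : ℝ} (hc1 : c / 16 < 1) (hxpos : 0 < x)
    (hx : ((1 - c / 16)⁻¹) ^ 16 ≤ x) : c ≤ Real.log x := by
  rw [Real.le_log_iff_exp_le hxpos]
  have h1 : Real.exp c = Real.exp (c / 16) ^ 16 := by
    rw [← Real.exp_nat_mul]; push_cast; ring_nf
  have h2 : Real.exp (c / 16) ^ 16 ≤ ((1 - c / 16)⁻¹) ^ 16 :=
    pow_le_pow_left₀ (Real.exp_pos _).le (exp_le_inv_one_sub hc1) 16
  linarith [h1 ▸ h2.trans hx]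

/-- `F(q) = log(4(q²-2)/(3q-2)) - (1 + 4/(3q-2))·log q` is positive for `q ≥ 11`. -/
theorem stmt7 (q : ℝ) (hq : 11 ≤ q) :
    0 < Real.log (4 * (q ^ 2 - 2) / (3 * q - 2))
        - (1 + 4 / (3 * q - 2)) * Real.log q := by
  have hq0 : (0:ℝ) < q := by linarith
  have h32 : (0:ℝ) < 3 * q - 2 := by linarith
  have hA : (0:ℝ) < q ^ 2 - 2 := by nlinarith
  set G : ℝ := 4 * (q ^ 2 - 2) / ((3 * q - 2) * q) with hGdef
  have hGpos : 0 < G := by positivity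
  have hsplit : Real.log (4 * (q ^ 2 - 2) / (3 * q - 2)) = Real.log G + Real.log q := by
    rw [← Real.log_mul (ne_of_gt hGpos) (ne_of_gt hq0)]
    have hne1 : (3 * q - 2) ≠ 0 := ne_of_gt h32
    have hne2 : q ≠ 0 := ne_of_gt hq0
    congr 1
    rw [hGdef]
    field_simp
  have hlog2 : Real.log 2 < 0.6931471808 := Real.log_two_lt_d9
  have hlog2pos : (0:ℝ) < Real.log 2 := Real.log_pos (by norm_num)
  -- log q ≤ log 11 + (q - 11)/11
  have hlogq : Real.log q ≤ Real.log 11 + (q - 11) / 11 := by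
    have h := Real.log_le_sub_one_of_pos (show (0:ℝ) < q / 11 by positivity)
    rw [Real.log_div (ne_of_gt hq0) (by norm_num)] at h
    linarith
  -- log 11 ≤ (7/2) log 2
  have hlog11 : Real.log 11 ≤ 7 / 2 * Real.log 2 := by
    have h1 : Real.log (121 : ℝ) ≤ Real.log 128 :=
      Real.log_le_log (by norm_num) (by norm_num)
    have h2 : Real.log (121 : ℝ) = 2 * Real.log 11 := by
      rw [show (121:ℝ) = 11 ^ 2 by norm_num, Real.log_pow]; push_cast; ring
    have h3 : Real.log (128 : ℝ) = 7 * Real.log 2 := by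
      rw [show (128:ℝ) = 2 ^ 7 by norm_num, Real.log_pow]; push_cast; ring
    linarith
  -- key: 4 log q < (3q - 2) * log G
  have key : 4 * Real.log q < (3 * q - 2) * Real.log G := by
    rcases le_or_gt q 14 with h14 | h14
    · -- G ≥ 97/70 on [11, 14]
      have hG : (97 / 70 : ℝ) ≤ G := by
        rw [hGdef, le_div_iff₀ (by positivity)]
        nlinarith
      have hlogG : (63 / 200 : ℝ) ≤ Real.log G :=
        le_trans (log_lb (by norm_num) (by norm_num) (by norm_num)) (Real.log_le_log (by norm_num) hG)
      have h1 : 4 * Real.log q < (3 * q - 2) * (63 / 200) := by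
        nlinarith [hlogq, hlog11, hlog2]
      nlinarith [hlogG, h32]
    · -- G ≥ 4/3 for q ≥ 14
      have hG : (4 / 3 : ℝ) ≤ G := by
        rw [hGdef, le_div_iff₀ (by positivity)]
        nlinarith
      have hlogG : (7 / 25 : ℝ) ≤ Real.log G :=
        le_trans (log_lb (by norm_num) (by norm_num) (by norm_num)) (Real.log_le_log (by norm_num) hG)
      -- log q ≤ log 14 + (q - 14)/14, log 14 ≤ 4 log 2
      have hlogq14 : Real.log q ≤ Real.log 14 + (q - 14) / 14 := by
        have h := Real.log_le_sub_one_of_pos (show (0:ℝ) < q / 14 by positivity)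
        rw [Real.log_div (ne_of_gt hq0) (by norm_num)] at h
        linarith
      have hlog14 : Real.log 14 ≤ 4 * Real.log 2 := by
        have h1 : Real.log (14 : ℝ) ≤ Real.log 16 :=
          Real.log_le_log (by norm_num) (by norm_num)
        have h3 : Real.log (16 : ℝ) = 4 * Real.log 2 := by
          rw [show (16:ℝ) = 2 ^ 4 by norm_num, Real.log_pow]; push_cast; ring
        linarith
      have h1 : 4 * Real.log q < (3 * q - 2) * (7 / 25) := by
        nlinarith [hlogq14, hlog14, hlog2]
      nlinarith [hlogG, h32]
  rw [hsplit]
  have hfrac : 4 / (3 * q - 2) * Real.log q < Real.log G := by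
    rw [div_mul_eq_mul_div, div_lt_iff₀ h32]
    linarith [key]
  nlinarith [hfrac]
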